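/- For all integers n ≥ k ≥ 1 and a ≥ 2, sum_{i=k}^{n} C(i-1, k-1) a^{n-i} (a-1)^{i-k} = sum_{i=k}^{n} C(n, i) (a-1)^{n-i}. -/

import Mathlib

lemma stmt_4_aux (b t : ℕ) : ∀ m : ℕ,
    ∑ j ∈ Finset.range (m + 1), (t + j).choose t * (b + 1) ^ (m - j) * b ^ j
      = ∑ j ∈ Finset.range (m + 1), (t + m + 1).choose j * b ^ j := by
  intro m
  induction m with
  | zero => simp
  | succ m ih =>
    have hL : ∑ j ∈ Finset.range (m + 2), (t + j).choose t * (b + 1) ^ (m + 1 - j) * b ^ j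
        = (b + 1) * (∑ j ∈ Finset.range (m + 1), (t + j).choose t * (b + 1) ^ (m - j) * b ^ j)
          + (t + (m + 1)).choose t * b ^ (m + 1) := by
      rw [Finset.sum_range_succ, Finset.mul_sum]
      congr 1
      · apply Finset.sum_congr rfl
        intro j hj
        have hjm : j ≤ m := by simpa [Nat.lt_succ_iff] using hj
        have : m + 1 - j = (m - j) + 1 := by omega
        rw [this, pow_succ]
        ring
      · simp
    have hterm : ∀ j, (t + (m + 1) + 1).choose (j + 1) * b ^ (j + 1)
        = (t + m + 1).choose j * b ^ (j + 1) + (t + m + 1).choose (j + 1) * b ^ (j + 1) := by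
      intro j
      have h : t + (m + 1) + 1 = (t + m + 1) + 1 := by ring
      rw [h, Nat.choose_succ_succ, add_mul]
    have h1 : ∑ j ∈ Finset.range (m + 1), (t + m + 1).choose j * b ^ (j + 1)
        = b * ∑ j ∈ Finset.range (m + 1), (t + m + 1).choose j * b ^ j := by
      rw [Finset.mul_sum]
      apply Finset.sum_congr rfl
      intro j _
      rw [pow_succ]; ring
    have h2 : (∑ j ∈ Finset.range (m + 1), (t + m + 1).choose (j + 1) * b ^ (j + 1))
        + (t + (m + 1) + 1).choose 0 * b ^ 0
        = ∑ j ∈ Finset.range (m + 2), (t + m + 1).choose j * b ^ j := by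
      rw [Finset.sum_range_succ' (fun j => (t + m + 1).choose j * b ^ j) (m + 1)]
      norm_num
    have h3 : ∑ j ∈ Finset.range (m + 2), (t + m + 1).choose j * b ^ j
        = (∑ j ∈ Finset.range (m + 1), (t + m + 1).choose j * b ^ j)
          + (t + m + 1).choose (m + 1) * b ^ (m + 1) := by
      rw [Finset.sum_range_succ]
    have hR : ∑ j ∈ Finset.range (m + 2), (t + (m + 1) + 1).choose j * b ^ j
        = (b + 1) * (∑ j ∈ Finset.range (m + 1), (t + m + 1).choose j * b ^ j)
          + (t + m + 1).choose (m + 1) * b ^ (m + 1) := by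
      rw [Finset.sum_range_succ']
      rw [Finset.sum_congr rfl fun j _ => hterm j, Finset.sum_add_distrib, h1]
      rw [add_assoc, h2.trans h3]
      ring
    have hsym : (t + (m + 1)).choose t = (t + m + 1).choose (m + 1) := by
      have := Nat.choose_symm (show m + 1 ≤ t + m + 1 by omega)
      rw [show t + (m + 1) = t + m + 1 by omega]
      simpa [show t + m + 1 - (m + 1) = t by omega] using this
    rw [hL, hR, ih, hsym]

/-- For `n ≥ k ≥ 1` and `a ≥ 2`:
`∑_{i=k}^{n} C(i-1,k-1) a^(n-i) (a-1)^(i-k) = ∑_{i=k}^{n} C(n,i) (a-1)^(n-i)`. -/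
theorem stmt_4 (a n k : ℕ) (ha : 2 ≤ a) (hk : 1 ≤ k) (hkn : k ≤ n) :
    ∑ i ∈ Finset.Icc k n, (i - 1).choose (k - 1) * a ^ (n - i) * (a - 1) ^ (i - k)
      = ∑ i ∈ Finset.Icc k n, n.choose i * (a - 1) ^ (n - i) := by
  set m := n - k with hm
  set t := k - 1 with ht
  set b := a - 1 with hb
  rw [← Finset.Ico_add_one_right_eq_Icc, Finset.sum_Ico_eq_sum_range, Finset.sum_Ico_eq_sum_range]
  have hcard : n + 1 - k = m + 1 := by omega
  rw [hcard]
  have key := stmt_4_aux b t m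
  calc ∑ j ∈ Finset.range (m + 1), (k + j - 1).choose (k - 1) * a ^ (n - (k + j)) * (a - 1) ^ (k + j - k)
      = ∑ j ∈ Finset.range (m + 1), (t + j).choose t * (b + 1) ^ (m - j) * b ^ j := by
        apply Finset.sum_congr rfl
        intro j hj
        have hjm : j ≤ m := by simpa [Nat.lt_succ_iff] using hj
        have e1 : k + j - 1 = t + j := by omega
        have e2 : a = b + 1 := by omega
        have e3 : n - (k + j) = m - j := by omega
        have e4 : k + j - k = j := by omega
        rw [e1, e3, e4, ht, hb, ← e2]
    _ = ∑ j ∈ Finset.range (m + 1), (t + m + 1).choose j * b ^ j := key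
    _ = ∑ j ∈ Finset.range (m + 1), n.choose (k + j) * (a - 1) ^ (n - (k + j)) := by
        rw [← Finset.sum_range_reflect (fun j => n.choose (k + j) * (a - 1) ^ (n - (k + j))) (m + 1)]
        apply Finset.sum_congr rfl
        intro j hj
        have hjm : j ≤ m := by simpa [Nat.lt_succ_iff] using hj
        have e5 : m + 1 - 1 - j = m - j := by omega
        have e6 : n - (k + (m - j)) = j := by omega
        have e7 : n.choose (k + (m - j)) = n.choose j := by
          have hle : k + (m - j) ≤ n := by omega
          have := Nat.choose_symm hle
          rw [show n - (k + (m - j)) = j by omega] at this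
          exact this.symm
        simp only [e5, e6, e7]
        rw [show t + m + 1 = n by omega]
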